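/- For every positive integer n, the number of partitions of n into odd parts equals the number of odd divisors of n, plus the number of partitions of n (dimension ≥ 2) in which all parts are odd except the smallest part which is even and with k₁ > k_m, plus the number of partitions of n (dimension ≥ 2) in which all parts are odd except the largest part which is even and with k₁ < k_m. -/

import Mathlib

/-- A partition `(λ₁,...,λ_m)×[k₁,...,k_m]`: strictly decreasing positive parts
with positive multiplicities, same length. -/
def IsPart (p : List ℕ × List ℕ) : Prop :=
  p.1.length = p.2.length ∧ List.Chain' (· > ·) p.1 ∧
  (∀ x ∈ p.1, 0 < x) ∧ (∀ x ∈ p.2, 0 < x)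

/-- size of a partition: Σ kᵢ λᵢ -/
def psize (p : List ℕ × List ℕ) : ℕ := (List.zipWith (· * ·) p.1 p.2).sum

def parts1 (L : List ℕ) : ℕ := L.headD 0      -- λ₁
def parts2 (L : List ℕ) : ℕ := L.tail.headD 0 -- λ₂
def parts3 (L : List ℕ) : ℕ := L.tail.tail.headD 0 -- λ₃
def partsLast (L : List ℕ) : ℕ := L.getLastD 0 -- λ_m
def partsPrelast (L : List ℕ) : ℕ := L.dropLast.getLastD 0 -- λ_{m-1}

def T0parts : List ℕ → List ℕ
  | a :: b :: t => b :: (t ++ [a - b])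
  | l => l

def T0mults : List ℕ → List ℕ
  | a :: b :: t => (a + b) :: (t ++ [a])
  | l => l

def T1parts (L : List ℕ) : List ℕ := (parts1 L - partsLast L) :: L.tail

def T1mults (K : List ℕ) : List ℕ := K.dropLast ++ [K.headD 0 + K.getLastD 0]

def TDparts (L : List ℕ) : List ℕ := L.tail

def TDmults : List ℕ → List ℕ
  | [a, b] => [2 * a + b]
  | a :: b :: t => (a + b) :: (t.dropLast ++ [a + t.getLastD 0])
  | l => l

def T0map (p : List ℕ × List ℕ) : List ℕ × List ℕ := (T0parts p.1, T0mults p.2)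
def T1map (p : List ℕ × List ℕ) : List ℕ × List ℕ := (T1parts p.1, T1mults p.2)

/-- △₀ : partitions of dimension ≥ 2 with λ₁ < λ₂ + λ_m -/
def Tri0 : Set (List ℕ × List ℕ) :=
  {p | IsPart p ∧ 2 ≤ p.1.length ∧ parts1 p.1 < parts2 p.1 + partsLast p.1}

/-- △₁ : partitions of dimension ≥ 2 with λ₁ > λ₂ + λ_m -/
def Tri1 : Set (List ℕ × List ℕ) :=
  {p | IsPart p ∧ 2 ≤ p.1.length ∧ parts2 p.1 + partsLast p.1 < parts1 p.1}

/-- M₀ : partitions of dimension ≥ 2 with k₁ > k_m -/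
def M0 : Set (List ℕ × List ℕ) :=
  {p | IsPart p ∧ 2 ≤ p.1.length ∧ p.2.getLastD 0 < p.2.headD 0}

/-- M₁ : partitions of dimension ≥ 2 with k₁ < k_m -/
def M1 : Set (List ℕ × List ℕ) :=
  {p | IsPart p ∧ 2 ≤ p.1.length ∧ p.2.headD 0 < p.2.getLastD 0}

/-- △_d^G : partitions with λ₂ + dλ_m < λ₁ < λ₂ + (d+1)λ_m -/
def GaussSet (d : ℕ) : Set (List ℕ × List ℕ) :=
  {p | IsPart p ∧ 2 ≤ p.1.length ∧
    parts2 p.1 + d * partsLast p.1 < parts1 p.1 ∧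
    parts1 p.1 < parts2 p.1 + (d + 1) * partsLast p.1}


lemma mem_getLastD (l : List ℕ) (d : ℕ) (h : l ≠ []) : l.getLastD d ∈ l := by
  cases l with
  | nil => simp at h
  | cons a t => rw [List.getLastD_cons]; exact List.getLastD_mem_cons

lemma getLastD_min : ∀ (l : List ℕ) (d : ℕ), l.Pairwise (· > ·) → ∀ x ∈ l, l.getLastD d ≤ x := by
  intro l
  induction l with
  | nil => simp
  | cons a t ih =>
    intro d hp x hx
    rw [List.getLastD_cons]
    rcases eq_or_ne t [] with rfl | ht
    · simp at hx ⊢; omega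
    · rcases List.mem_cons.1 hx with rfl | hxt
      · exact le_of_lt ((List.pairwise_cons.1 hp).1 _ (mem_getLastD t x ht))
      · exact ih a (List.pairwise_cons.1 hp).2 x hxt

lemma psize_cons (a c : ℕ) (L K : List ℕ) : psize (a :: L, c :: K) = a * c + psize (L, K) := by
  simp [psize]

lemma psize_append_single (L K : List ℕ) (h : L.length = K.length) (z f : ℕ) :
    psize (L ++ [z], K ++ [f]) = psize (L, K) + z * f := by
  simp [psize, List.zipWith_append h]

lemma zip_bound : ∀ (L K : List ℕ), L.length = K.length → (∀ x ∈ L, 0 < x) → (∀ x ∈ K, 0 < x) →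
    L.length ≤ psize (L, K) ∧ (∀ x ∈ L, x ≤ psize (L, K)) ∧ (∀ x ∈ K, x ≤ psize (L, K)) := by
  intro L
  induction L with
  | nil => intro K h _ _; simp [psize, List.length_eq_zero_iff.1 h.symm]
  | cons a t ih =>
    intro K hlen hL hK
    cases K with
    | nil => simp at hlen
    | cons c u =>
      simp only [List.length_cons, Nat.add_left_inj] at hlen
      have hac : 0 < a * c := Nat.mul_pos (hL a (by simp)) (hK c (by simp))
      obtain ⟨h1, h2, h3⟩ := ih u hlen (fun x hx => hL x (by simp [hx])) (fun x hx => hK x (by simp [hx]))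
      rw [psize_cons]
      refine ⟨by simp; omega, ?_, ?_⟩
      · intro x hx
        rcases List.mem_cons.1 hx with rfl | hxt
        · have := Nat.le_mul_of_pos_right x (hK c (by simp)); omega
        · have := h2 x hxt; omega
      · intro x hx
        rcases List.mem_cons.1 hx with rfl | hxt
        · have := Nat.le_mul_of_pos_left x (hL a (by simp)); omega
        · have := h3 x hxt; omega

lemma lists_finite (n : ℕ) : {l : List ℕ | l.length ≤ n ∧ ∀ x ∈ l, x < n + 1}.Finite := by
  have h1 : {l : List (Fin (n + 1)) | l.length ≤ n}.Finite := List.finite_length_le _ n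
  have h2 := h1.image (List.map (Fin.val))
  refine h2.subset ?_
  rintro l ⟨hlen, hmem⟩
  refine ⟨l.pmap (fun x hx => (⟨x, hx⟩ : Fin (n + 1))) hmem, by simpa using hlen, ?_⟩
  rw [List.map_pmap]
  simpa using (List.pmap_eq_map _ _ l hmem ▸ List.map_id l)

lemma parts_finite (n : ℕ) : {p : List ℕ × List ℕ | IsPart p ∧ psize p = n}.Finite := by
  refine (Set.Finite.prod (lists_finite n) (lists_finite n)).subset ?_
  rintro ⟨L, K⟩ ⟨⟨hlen, _, hL, hK⟩, hsz⟩
  have hlen2 : L.length = K.length := hlen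
  obtain ⟨h1, h2, h3⟩ := zip_bound L K hlen hL hK
  refine ⟨⟨?_, fun x hx => ?_⟩, ?_, fun x hx => ?_⟩
  · show L.length ≤ n; omega
  · have := h2 x hx; omega
  · show K.length ≤ n; omega
  · have := h3 x hx; omega

def SOdd (n : ℕ) : Set (List ℕ × List ℕ) :=
  {p | IsPart p ∧ psize p = n ∧ ∀ x ∈ p.1, Odd x}

def SA (n : ℕ) : Set (List ℕ × List ℕ) :=
  {p ∈ SOdd n | 2 ≤ p.1.length ∧ parts1 p.1 < parts2 p.1 + partsLast p.1}

def SB (n : ℕ) : Set (List ℕ × List ℕ) :=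
  {p ∈ SOdd n | 2 ≤ p.1.length ∧ parts2 p.1 + partsLast p.1 < parts1 p.1}

def SD (n : ℕ) : Set (List ℕ × List ℕ) :=
  {p ∈ SOdd n | p.1.length = 1}

def AS (n : ℕ) : Set (List ℕ × List ℕ) :=
  {p | IsPart p ∧ 2 ≤ p.1.length ∧ psize p = n ∧
    (∀ x ∈ p.1.dropLast, Odd x) ∧ Even (partsLast p.1) ∧
    p.2.getLastD 0 < p.2.headD 0}

def BS (n : ℕ) : Set (List ℕ × List ℕ) :=
  {p | IsPart p ∧ 2 ≤ p.1.length ∧ psize p = n ∧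
    (∀ x ∈ p.1.tail, Odd x) ∧ Even (parts1 p.1) ∧
    p.2.headD 0 < p.2.getLastD 0}

lemma T0_mem (n : ℕ) : ∀ p ∈ SA n, T0map p ∈ AS n := by
  rintro ⟨L, K⟩ ⟨⟨⟨hlen, hchain, hLpos, hKpos⟩, hsz, hodd⟩, hdim, htri⟩
  simp only at hlen hchain hLpos hKpos hodd hdim htri hsz ⊢
  rcases L with _ | ⟨a, _ | ⟨b, t⟩⟩
  · simp at hdim
  · simp at hdim
  rcases K with _ | ⟨c, _ | ⟨d, u⟩⟩
  · simp at hlen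
  · simp at hlen
  simp only [List.length_cons, Nat.add_left_inj] at hlen
  have hpw : (a :: b :: t).Pairwise (· > ·) := List.isChain_iff_pairwise.1 hchain
  have hba : b < a := (List.pairwise_cons.1 hpw).1 b (by simp)
  simp only [parts1, parts2, partsLast, List.headD_cons, List.tail_cons,
    List.getLastD_cons] at htri
  set e := t.getLastD b with he
  have hemem : e ∈ b :: t := List.getLastD_mem_cons
  have hemin : ∀ x ∈ b :: t, e ≤ x := by
    intro x hx
    have := getLastD_min (b :: t) b hpw.of_cons x hx
    rwa [List.getLastD_cons] at this
  have heb : e ≤ b := hemin b (by simp)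
  have hT : T0map (a :: b :: t, c :: d :: u) =
      (b :: (t ++ [a - b]), (c + d) :: (u ++ [c])) := rfl
  rw [hT]
  have hcat : b :: (t ++ [a - b]) = (b :: t) ++ [a - b] := by simp
  have hcat2 : (c + d) :: (u ++ [c]) = ((c + d) :: u) ++ [c] := by simp
  have hab_lt_e : a - b < e := by omega
  have hpos_ab : 0 < a - b := by omega
  refine ⟨⟨?_, ?_, ?_, ?_⟩, ?_, ?_, ?_, ?_, ?_⟩
  · simp [hlen]
  · refine List.isChain_iff_pairwise.2 ?_
    simp only [List.pairwise_cons] at hpw ⊢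
    constructor
    · intro x hx
      rcases List.mem_append.1 hx with hx | hx
      · exact hpw.2.1 x hx
      · simp only [List.mem_singleton] at hx; omega
    · rw [List.pairwise_append]
      refine ⟨hpw.2.2, by simp, ?_⟩
      intro x hx y hy
      simp only [List.mem_singleton] at hy
      have := hemin x (by simp [hx])
      omega
  · intro x hx
    simp only [List.mem_cons, List.mem_append, List.mem_singleton] at hx
    rcases hx with rfl | hx | rfl | h0
    · exact hLpos _ (by simp)
    · exact hLpos x (by simp [hx])
    · omega
    · simp at h0
  · intro x hx
    have hc := hKpos c (by simp)
    have hd := hKpos d (by simp)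
    simp only [List.mem_cons, List.mem_append, List.mem_singleton] at hx
    rcases hx with rfl | hx | rfl | h0
    · omega
    · exact hKpos x (by simp [hx])
    · omega
    · simp at h0
  · simp
  · rw [psize_cons] at hsz
    rw [psize_cons ] at hsz
    rw [psize_cons, psize_append_single t u hlen]
    have key : (a - b) * c + b * c = a * c := by
      rw [← Nat.add_mul, Nat.sub_add_cancel hba.le]
    nlinarith [hsz, key]
  · rw [hcat, List.dropLast_concat]
    intro x hx
    exact hodd x (by simp [List.mem_cons.1 hx])
  · rw [partsLast, hcat, List.getLastD_concat]
    exact Nat.Odd.sub_odd (hodd a (by simp)) (hodd b (by simp))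
  · have h1 : ((c + d) :: (u ++ [c])).getLastD 0 = c := by rw [hcat2, List.getLastD_concat]
    rw [h1, List.headD_cons]
    have := hKpos d (by simp); omega

lemma T0_inj (n : ℕ) : Set.InjOn T0map (SA n) := by
  rintro ⟨L, K⟩ ⟨⟨⟨hlen, hchain, hLpos, hKpos⟩, hsz, hodd⟩, hdim, htri⟩
    ⟨L', K'⟩ ⟨⟨⟨hlen', hchain', hLpos', hKpos'⟩, hsz', hodd'⟩, hdim', htri'⟩ heq
  simp only at *
  rcases L with _ | ⟨a, _ | ⟨b, t⟩⟩
  · simp at hdim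
  · simp at hdim
  rcases K with _ | ⟨c, _ | ⟨d, u⟩⟩
  · simp at hlen
  · simp at hlen
  rcases L' with _ | ⟨a', _ | ⟨b', t'⟩⟩
  · simp at hdim'
  · simp at hdim'
  rcases K' with _ | ⟨c', _ | ⟨d', u'⟩⟩
  · simp at hlen'
  · simp at hlen'
  simp only [List.length_cons, Nat.add_left_inj] at hlen hlen'
  have hba : b < a := by
    have hpw := List.isChain_iff_pairwise.1 hchain
    exact (List.pairwise_cons.1 hpw).1 b (by simp)
  have hba' : b' < a' := by
    have hpw := List.isChain_iff_pairwise.1 hchain'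
    exact (List.pairwise_cons.1 hpw).1 b' (by simp)
  have h1 : T0map (a :: b :: t, c :: d :: u) =
      (b :: (t ++ [a - b]), (c + d) :: (u ++ [c])) := rfl
  have h2 : T0map (a' :: b' :: t', c' :: d' :: u') =
      (b' :: (t' ++ [a' - b']), (c' + d') :: (u' ++ [c'])) := rfl
  rw [h1, h2, Prod.mk.injEq] at heq
  obtain ⟨heq1, heq2⟩ := heq
  rw [List.cons_eq_cons] at heq1 heq2
  obtain ⟨hb, ht⟩ := heq1
  obtain ⟨hcd, hu⟩ := heq2
  have hlt : t.length = t'.length := by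
    have := congrArg List.length ht; simp at this; omega
  obtain ⟨ht2, hz⟩ := List.append_inj' ht (by simp)
  obtain ⟨hu2, hc⟩ := List.append_inj' hu (by simp [hlen, hlen', hlt, ht2])
  simp only [List.cons_eq_cons, and_true] at hz hc
  subst hb ht2 hu2 hc
  simp only [Prod.mk.injEq, List.cons_eq_cons, and_true, true_and]
  omega

lemma T0_surj (n : ℕ) : AS n ⊆ T0map '' SA n := by
  rintro ⟨L, K⟩ ⟨⟨hlen, hchain, hLpos, hKpos⟩, hdim, hsz, hodd, heven, hmul⟩
  simp only at *
  rcases L with _ | ⟨b, r⟩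
  · simp at hdim
  rcases r.eq_nil_or_concat with rfl | ⟨t, z, rfl⟩
  · simp at hdim
  rcases K with _ | ⟨e, w⟩
  · simp at hlen
  rcases w.eq_nil_or_concat with rfl | ⟨u, c, rfl⟩
  · simp at hlen
  simp only [List.concat_eq_append] at *
  have hlen2 : t.length = u.length := by simp at hlen; omega
  have hpw : (b :: (t ++ [z])).Pairwise (· > ·) := List.isChain_iff_pairwise.1 hchain
  have hcat : b :: (t ++ [z]) = (b :: t) ++ [z] := by simp
  have hcat2 : e :: (u ++ [c]) = (e :: u) ++ [c] := by simp
  have hz_even : Even z := by rwa [partsLast, hcat, List.getLastD_concat] at heven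
  have hodd2 : ∀ x ∈ b :: t, Odd x := by
    rw [hcat, List.dropLast_concat] at hodd; exact hodd
  have hce : c < e := by
    have h1 : (e :: (u ++ [c])).getLastD 0 = c := by rw [hcat2, List.getLastD_concat]
    rwa [h1, List.headD_cons] at hmul
  have hzlt : ∀ x ∈ b :: t, z < x := by
    rw [hcat, List.pairwise_append] at hpw
    intro x hx
    exact hpw.2.2 x hx z (by simp)
  have hzpos : 0 < z := hLpos z (by simp)
  have hbpos : 0 < b := hLpos b (by simp)
  have hcpos : 0 < c := hKpos c (by simp)
  refine ⟨((z + b) :: b :: t, c :: (e - c) :: u), ⟨⟨⟨?_, ?_, ?_, ?_⟩, ?_, ?_⟩, ?_, ?_⟩, ?_⟩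
  · simp [hlen2]
  · refine List.isChain_iff_pairwise.2 ?_
    rw [List.pairwise_cons]
    constructor
    · intro x hx
      rcases List.mem_cons.1 hx with rfl | hx
      · omega
      · have hsub : List.Sublist (b :: t) (b :: (t ++ [z])) :=
          List.Sublist.cons₂ b (List.sublist_append_left t [z])
        have : x < b := (List.pairwise_cons.1 (List.Pairwise.sublist hsub hpw)).1 x hx
        omega
    · exact List.Pairwise.sublist
        (List.Sublist.cons₂ b (List.sublist_append_left t [z])) hpw
  · intro x hx
    rcases List.mem_cons.1 hx with rfl | hx
    · omega
    · rcases List.mem_cons.1 hx with rfl | hx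
      · omega
      · exact hLpos x (by simp [hx])
  · intro x hx
    rcases List.mem_cons.1 hx with rfl | hx
    · omega
    · rcases List.mem_cons.1 hx with rfl | hx
      · omega
      · exact hKpos x (by simp [hx])
  · rw [psize_cons, psize_cons]
    rw [psize_cons, psize_append_single t u hlen2] at hsz
    have key : b * (e - c) + b * c = b * e := by
      rw [← Nat.mul_add, Nat.sub_add_cancel hce.le]
    have expand : (z + b) * c = z * c + b * c := Nat.add_mul z b c
    linarith
  · intro x hx
    rcases List.mem_cons.1 hx with rfl | hx
    · exact hz_even.add_odd (hodd2 b (by simp))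
    · exact hodd2 x hx
  · simp
  · simp only [parts1, parts2, partsLast, List.headD_cons, List.tail_cons, List.getLastD_cons]
    have hmem : t.getLastD b ∈ b :: t := List.getLastD_mem_cons
    have := hzlt _ hmem
    omega
  · have e1 : z + b - b = z := by omega
    have e2 : c + (e - c) = e := by omega
    show (b :: (t ++ [z + b - b]), (c + (e - c)) :: (u ++ [c])) = _
    rw [e1, e2]

lemma mem_headD (l : List ℕ) (d : ℕ) (h : l ≠ []) : l.headD d ∈ l := by
  cases l with
  | nil => simp at h
  | cons a t => simp

lemma headD_max (l : List ℕ) (d : ℕ) (hp : l.Pairwise (· > ·)) :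
    ∀ x ∈ l, x ≤ l.headD d := by
  cases l with
  | nil => simp
  | cons a t =>
    intro x hx
    rcases List.mem_cons.1 hx with rfl | hx
    · simp
    · simp only [List.headD_cons]
      exact le_of_lt ((List.pairwise_cons.1 hp).1 x hx)

lemma T1_shape (a z c f : ℕ) (s u : List ℕ) :
    T1map (a :: (s ++ [z]), c :: (u ++ [f])) =
      ((a - z) :: (s ++ [z]), (c :: u) ++ [c + f]) := by
  have h1 : partsLast (a :: (s ++ [z])) = z := by
    rw [partsLast, show a :: (s ++ [z]) = (a :: s) ++ [z] by simp, List.getLastD_concat]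
  have h2 : (c :: (u ++ [f])).dropLast = c :: u := by
    rw [show c :: (u ++ [f]) = (c :: u) ++ [f] by simp, List.dropLast_concat]
  have h3 : (c :: (u ++ [f])).getLastD 0 = f := by
    rw [show c :: (u ++ [f]) = (c :: u) ++ [f] by simp, List.getLastD_concat]
  have h3' : (c :: (u ++ [f])).getLast?.getD 0 = f := by
    rw [← List.getLastD_eq_getLast?]; exact h3
  simp [T1map, T1parts, T1mults, h1, h2, h3, h3', parts1]

lemma T1_mem (n : ℕ) : ∀ p ∈ SB n, T1map p ∈ BS n := by
  rintro ⟨L, K⟩ ⟨⟨⟨hlen, hchain, hLpos, hKpos⟩, hsz, hodd⟩, hdim, htri⟩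
  simp only at *
  rcases L with _ | ⟨a, r⟩
  · simp at hdim
  rcases r.eq_nil_or_concat with rfl | ⟨s, z, rfl⟩
  · simp at hdim
  rcases K with _ | ⟨c, w⟩
  · simp at hlen
  rcases w.eq_nil_or_concat with rfl | ⟨u, f, rfl⟩
  · simp at hlen
  simp only [List.concat_eq_append] at *
  have hlen2 : s.length = u.length := by simp at hlen; omega
  have hpw : (a :: (s ++ [z])).Pairwise (· > ·) := List.isChain_iff_pairwise.1 hchain
  have hb0mem : (s ++ [z]).headD 0 ∈ s ++ [z] := mem_headD _ 0 (by simp)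
  have hb0pos : 0 < (s ++ [z]).headD 0 := hLpos _ (List.mem_cons.2 (Or.inr hb0mem))
  have htri2 : (s ++ [z]).headD 0 + partsLast (a :: (s ++ [z])) < a := by
    simpa only [parts2, parts1, List.tail_cons, List.headD_cons] using htri
  have hplast : partsLast (a :: (s ++ [z])) = z := by
    rw [partsLast, show a :: (s ++ [z]) = (a :: s) ++ [z] by simp, List.getLastD_concat]
  rw [hplast] at htri2
  have hzodd : Odd z := hodd z (by simp)
  have haodd : Odd a := hodd a (by simp)
  have hfpos : 0 < f := hKpos f (by simp)
  have hcpos : 0 < c := hKpos c (by simp)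
  rw [T1_shape]
  refine ⟨⟨?_, ?_, ?_, ?_⟩, ?_, ?_, ?_, ?_, ?_⟩
  · simp [hlen2]
  · refine List.isChain_iff_pairwise.2 ?_
    rw [List.pairwise_cons]
    refine ⟨?_, hpw.of_cons⟩
    intro x hx
    have := headD_max (s ++ [z]) 0 hpw.of_cons x hx
    omega
  · intro x hx
    rcases List.mem_cons.1 hx with rfl | hx
    · omega
    · exact hLpos x (by simp [List.mem_cons.2 (Or.inr hx)])
  · intro x hx
    simp only [List.cons_append, List.mem_cons, List.mem_append, List.mem_singleton] at hx
    rcases hx with rfl | hx | rfl | h0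
    · omega
    · exact hKpos x (by simp [hx])
    · omega
    · simp at h0
  · simp
  · rw [show (c :: u) ++ [c + f] = c :: (u ++ [c + f]) by simp]
    rw [psize_cons, psize_append_single s u hlen2]
    rw [psize_cons, psize_append_single s u hlen2] at hsz
    have key : (a - z) * c + z * c = a * c := by
      rw [← Nat.add_mul, Nat.sub_add_cancel (by omega)]
    have expand : z * (c + f) = z * c + z * f := Nat.mul_add z c f
    linarith
  · intro x hx
    rw [List.tail_cons] at hx
    exact hodd x (List.mem_cons.2 (Or.inr hx))
  · simp only [parts1, List.headD_cons]
    exact Nat.Odd.sub_odd haodd hzodd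
  · rw [show (c :: u) ++ [c + f] = c :: (u ++ [c + f]) by simp]
    have h3 : (c :: (u ++ [c + f])).getLastD 0 = c + f := by
      rw [show c :: (u ++ [c + f]) = (c :: u) ++ [c + f] by simp, List.getLastD_concat]
    rw [h3, List.headD_cons]
    omega

lemma T1_inj (n : ℕ) : Set.InjOn T1map (SB n) := by
  rintro ⟨L, K⟩ ⟨⟨⟨hlen, hchain, hLpos, hKpos⟩, hsz, hodd⟩, hdim, htri⟩
    ⟨L', K'⟩ ⟨⟨⟨hlen', hchain', hLpos', hKpos'⟩, hsz', hodd'⟩, hdim', htri'⟩ heq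
  simp only at *
  rcases L with _ | ⟨a, r⟩
  · simp at hdim
  rcases r.eq_nil_or_concat with rfl | ⟨s, z, rfl⟩
  · simp at hdim
  rcases K with _ | ⟨c, w⟩
  · simp at hlen
  rcases w.eq_nil_or_concat with rfl | ⟨u, f, rfl⟩
  · simp at hlen
  rcases L' with _ | ⟨a', r'⟩
  · simp at hdim'
  rcases r'.eq_nil_or_concat with rfl | ⟨s', z', rfl⟩
  · simp at hdim'
  rcases K' with _ | ⟨c', w'⟩
  · simp at hlen'
  rcases w'.eq_nil_or_concat with rfl | ⟨u', f', rfl⟩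
  · simp at hlen'
  simp only [List.concat_eq_append] at *
  rw [T1_shape, T1_shape, Prod.mk.injEq, List.cons_eq_cons] at heq
  obtain ⟨⟨haz, hts⟩, hK⟩ := heq
  have hlt : s.length = s'.length := by
    have := congrArg List.length hts; simp at this; omega
  obtain ⟨hs, hzz⟩ := List.append_inj' hts (by simp)
  simp only [List.cons_eq_cons, and_true] at hzz
  have hlu : u.length = u'.length := by
    simp at hlen hlen'; omega
  obtain ⟨hcu, hcf⟩ := List.append_inj' hK (by simp)
  simp only [List.cons_eq_cons, and_true] at hcf
  obtain ⟨hc, hu⟩ := List.cons_eq_cons.1 hcu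
  have hza : z ≤ a := by
    have hb0mem : (s ++ [z]).headD 0 ∈ s ++ [z] := mem_headD _ 0 (by simp)
    have := htri
    simp only [parts2, parts1, List.tail_cons, List.headD_cons] at this
    have hplast : partsLast (a :: (s ++ [z])) = z := by
      rw [partsLast, show a :: (s ++ [z]) = (a :: s) ++ [z] by simp, List.getLastD_concat]
    omega
  have hza' : z' ≤ a' := by
    have := htri'
    simp only [parts2, parts1, List.tail_cons, List.headD_cons] at this
    have hplast : partsLast (a' :: (s' ++ [z'])) = z' := by
      rw [partsLast, show a' :: (s' ++ [z']) = (a' :: s') ++ [z'] by simp, List.getLastD_concat]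
    omega
  subst hs hzz hc hu
  have hf : f = f' := by omega
  have ha : a = a' := by omega
  subst hf ha
  rfl

lemma T1_surj (n : ℕ) : BS n ⊆ T1map '' SB n := by
  rintro ⟨L, K⟩ ⟨⟨hlen, hchain, hLpos, hKpos⟩, hdim, hsz, hodd, heven, hmul⟩
  simp only at *
  rcases L with _ | ⟨g, r⟩
  · simp at hdim
  rcases r.eq_nil_or_concat with rfl | ⟨s, z, rfl⟩
  · simp at hdim
  rcases K with _ | ⟨c, w⟩
  · simp at hlen
  rcases w.eq_nil_or_concat with rfl | ⟨u, h, rfl⟩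
  · simp at hlen
  simp only [List.concat_eq_append] at *
  have hlen2 : s.length = u.length := by simp at hlen; omega
  have hpw : (g :: (s ++ [z])).Pairwise (· > ·) := List.isChain_iff_pairwise.1 hchain
  have hch : c < h := by
    have h3 : (c :: (u ++ [h])).getLastD 0 = h := by
      rw [show c :: (u ++ [h]) = (c :: u) ++ [h] by simp, List.getLastD_concat]
    rwa [h3, List.headD_cons] at hmul
  have hgeven : Even g := by simpa [parts1] using heven
  have hzodd : Odd z := hodd z (by simp)
  have hzpos : 0 < z := hLpos z (by simp)
  have hgpos : 0 < g := hLpos g (by simp)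
  have hcpos : 0 < c := hKpos c (by simp)
  refine ⟨((g + z) :: (s ++ [z]), c :: (u ++ [h - c])), ⟨⟨⟨?_, ?_, ?_, ?_⟩, ?_, ?_⟩, ?_, ?_⟩, ?_⟩
  · simp [hlen2]
  · refine List.isChain_iff_pairwise.2 ?_
    rw [List.pairwise_cons]
    refine ⟨?_, hpw.of_cons⟩
    intro x hx
    have h1 := (List.pairwise_cons.1 hpw).1 x hx
    omega
  · intro x hx
    rcases List.mem_cons.1 hx with rfl | hx
    · omega
    · exact hLpos x (by simp [List.mem_cons.2 (Or.inr hx)])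
  · intro x hx
    simp only [List.mem_cons, List.mem_append, List.mem_singleton] at hx
    rcases hx with rfl | hx | rfl | h0
    · omega
    · exact hKpos x (by simp [hx])
    · omega
    · simp at h0
  · rw [psize_cons, psize_append_single s u hlen2]
    rw [show c :: (u ++ [h]) = c :: (u ++ [h]) from rfl, psize_cons,
      psize_append_single s u hlen2] at hsz
    have expand : (g + z) * c = g * c + z * c := Nat.add_mul g z c
    have key : z * (h - c) + z * c = z * h := by
      rw [← Nat.mul_add, Nat.sub_add_cancel hch.le]
    linarith
  · intro x hx
    rcases List.mem_cons.1 hx with rfl | hx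
    · exact hgeven.add_odd hzodd
    · exact hodd x (by simpa using hx)
  · simp
  · simp only [parts2, parts1, List.tail_cons, List.headD_cons]
    have hplast : partsLast ((g + z) :: (s ++ [z])) = z := by
      rw [partsLast, show (g + z) :: (s ++ [z]) = ((g + z) :: s) ++ [z] by simp,
        List.getLastD_concat]
    rw [hplast]
    have hb0mem : (s ++ [z]).headD 0 ∈ s ++ [z] := mem_headD _ 0 (by simp)
    have := (List.pairwise_cons.1 hpw).1 _ hb0mem
    omega
  · rw [T1_shape]
    have e1 : g + z - z = g := by omega
    have e2 : c + (h - c) = h := by omega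
    rw [e1, e2]
    simp

lemma SD_image (n : ℕ) (hn : 0 < n) :
    {d : ℕ | d ∣ n ∧ Odd d} = (fun p : List ℕ × List ℕ => parts1 p.1) '' SD n := by
  ext d
  constructor
  · rintro ⟨⟨k, hk⟩, hodd⟩
    have hd : 0 < d := by rcases hodd with ⟨j, hj⟩; omega
    have hk0 : 0 < k := by by_contra h; push_neg at h; interval_cases k <;> omega
    refine ⟨([d], [k]), ⟨⟨⟨rfl, ?_, ?_, ?_⟩, ?_, ?_⟩, rfl⟩, rfl⟩
    · exact List.isChain_singleton d
    · intro x hx; simp at hx; omega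
    · intro x hx; simp at hx; omega
    · simp [psize]; omega
    · intro x hx; simp at hx; subst hx; exact hodd
  · rintro ⟨⟨L, K⟩, ⟨⟨⟨hlen, hchain, hLpos, hKpos⟩, hsz, hodd⟩, hlen1⟩, rfl⟩
    simp only at *
    obtain ⟨x, rfl⟩ := List.length_eq_one_iff.1 hlen1
    obtain ⟨k, rfl⟩ := List.length_eq_one_iff.1 (hlen ▸ rfl : K.length = 1)
    simp only [psize, List.zipWith, List.sum_cons, List.sum_nil, add_zero] at hsz
    exact ⟨⟨k, by simp [parts1]; omega⟩, by simpa [parts1] using hodd x (by simp)⟩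

lemma SD_inj (n : ℕ) (hn : 0 < n) :
    Set.InjOn (fun p : List ℕ × List ℕ => parts1 p.1) (SD n) := by
  rintro ⟨L, K⟩ ⟨⟨⟨hlen, hchain, hLpos, hKpos⟩, hsz, hodd⟩, hlen1⟩
    ⟨L', K'⟩ ⟨⟨⟨hlen', hchain', hLpos', hKpos'⟩, hsz', hodd'⟩, hlen1'⟩ heq
  simp only at *
  obtain ⟨x, rfl⟩ := List.length_eq_one_iff.1 hlen1
  obtain ⟨k, rfl⟩ := List.length_eq_one_iff.1 (hlen ▸ rfl : K.length = 1)
  obtain ⟨x', rfl⟩ := List.length_eq_one_iff.1 hlen1'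
  obtain ⟨k', rfl⟩ := List.length_eq_one_iff.1 (hlen' ▸ rfl : K'.length = 1)
  simp only [parts1, List.headD_cons] at heq
  subst heq
  simp only [psize, List.zipWith, List.sum_cons, List.sum_nil, add_zero] at hsz hsz'
  have hx : 0 < x := hLpos x (by simp)
  have : k = k' := by
    have : x * k = x * k' := by omega
    exact Nat.eq_of_mul_eq_mul_left hx this
  simp [this]

lemma decomp (n : ℕ) (hn : 0 < n) : SOdd n = SD n ∪ SA n ∪ SB n := by
  ext ⟨L, K⟩
  constructor
  · intro hp
    obtain ⟨⟨hlen, hchain, hLpos, hKpos⟩, hsz, hodd⟩ := hp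
    simp only at *
    rcases L with _ | ⟨a, _ | ⟨b, t⟩⟩
    · exfalso
      obtain ⟨k, rfl⟩ := List.length_eq_zero_iff.1 hlen.symm
      simp [psize] at hsz; omega
    · exact Or.inl (Or.inl ⟨⟨⟨hlen, hchain, hLpos, hKpos⟩, hsz, hodd⟩, rfl⟩)
    · have hpl : partsLast (a :: b :: t) = t.getLastD b := by
        rw [partsLast, List.getLastD_cons, List.getLastD_cons]
      have hmem : t.getLastD b ∈ b :: t := List.getLastD_mem_cons
      have hodd_e : Odd (t.getLastD b) := hodd _ (List.mem_cons.2 (Or.inr hmem))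
      have hodd_a : Odd a := hodd a (by simp)
      have hodd_b : Odd b := hodd b (by simp)
      have hne : a ≠ b + t.getLastD b := by
        rcases hodd_a with ⟨i, hi⟩; rcases hodd_b with ⟨j, hj⟩
        rcases hodd_e with ⟨l, hl⟩; omega
      have h12 : parts1 (a :: b :: t) = a := rfl
      have h22 : parts2 (a :: b :: t) = b := rfl
      rcases lt_or_gt_of_ne hne with h | h
      · exact Or.inl (Or.inr ⟨⟨⟨hlen, hchain, hLpos, hKpos⟩, hsz, hodd⟩, by simp,
          by rw [h12, h22, hpl]; exact h⟩)
      · exact Or.inr ⟨⟨⟨hlen, hchain, hLpos, hKpos⟩, hsz, hodd⟩, by simp,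
          by rw [h12, h22, hpl]; exact h⟩
  · rintro ((⟨h, _⟩ | ⟨h, _⟩) | ⟨h, _⟩) <;> exact h

theorem stmt18 (n : ℕ) (hn : 0 < n) :
    {p : List ℕ × List ℕ | IsPart p ∧ psize p = n ∧ ∀ x ∈ p.1, Odd x}.ncard =
      {d : ℕ | d ∣ n ∧ Odd d}.ncard +
      {p : List ℕ × List ℕ | IsPart p ∧ 2 ≤ p.1.length ∧ psize p = n ∧
        (∀ x ∈ p.1.dropLast, Odd x) ∧ Even (partsLast p.1) ∧
        p.2.getLastD 0 < p.2.headD 0}.ncard +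
      {p : List ℕ × List ℕ | IsPart p ∧ 2 ≤ p.1.length ∧ psize p = n ∧
        (∀ x ∈ p.1.tail, Odd x) ∧ Even (parts1 p.1) ∧
        p.2.headD 0 < p.2.getLastD 0}.ncard := by
  have hSOdd : (SOdd n).Finite :=
    (parts_finite n).subset (fun p ⟨h1, h2, _⟩ => ⟨h1, h2⟩)
  have hSD : (SD n).Finite := hSOdd.subset (fun p hp => hp.1)
  have hSA : (SA n).Finite := hSOdd.subset (fun p hp => hp.1)
  have hSB : (SB n).Finite := hSOdd.subset (fun p hp => hp.1)
  have hAS_eq : AS n = T0map '' SA n :=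
    Set.Subset.antisymm (T0_surj n) (fun q ⟨p, hp, hq⟩ => hq ▸ T0_mem n p hp)
  have hBS_eq : BS n = T1map '' SB n :=
    Set.Subset.antisymm (T1_surj n) (fun q ⟨p, hp, hq⟩ => hq ▸ T1_mem n p hp)
  have e1 : {p : List ℕ × List ℕ | IsPart p ∧ 2 ≤ p.1.length ∧ psize p = n ∧
        (∀ x ∈ p.1.dropLast, Odd x) ∧ Even (partsLast p.1) ∧
        p.2.getLastD 0 < p.2.headD 0}.ncard = (SA n).ncard := by
    show (AS n).ncard = _
    rw [hAS_eq, Set.ncard_image_of_injOn (T0_inj n)]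
  have e2 : {p : List ℕ × List ℕ | IsPart p ∧ 2 ≤ p.1.length ∧ psize p = n ∧
        (∀ x ∈ p.1.tail, Odd x) ∧ Even (parts1 p.1) ∧
        p.2.headD 0 < p.2.getLastD 0}.ncard = (SB n).ncard := by
    show (BS n).ncard = _
    rw [hBS_eq, Set.ncard_image_of_injOn (T1_inj n)]
  have e3 : {d : ℕ | d ∣ n ∧ Odd d}.ncard = (SD n).ncard := by
    rw [SD_image n hn, Set.ncard_image_of_injOn (SD_inj n hn)]
  rw [e1, e2, e3]
  show (SOdd n).ncard = _
  rw [decomp n hn]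
  have hdisj1 : Disjoint (SD n) (SA n) := by
    rw [Set.disjoint_left]
    rintro p ⟨_, h1⟩ ⟨_, h2, _⟩
    omega
  have hdisj2 : Disjoint (SD n ∪ SA n) (SB n) := by
    rw [Set.disjoint_left]
    rintro p (⟨_, h1⟩ | ⟨_, _, h1⟩) ⟨_, h2, h3⟩
    · omega
    · omega
  rw [Set.ncard_union_eq hdisj2 (hSD.union hSA) hSB,
    Set.ncard_union_eq hdisj1 hSD hSA]
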